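/- Calderón–Zygmund lemma on a bounded space: let (X,d,μ) be a doubling quasimetric measure space with diam X < ∞, equipped with a dyadic system 𝒟* with parameters c₀, C₀, δ. Let f ∈ L¹, λ > 0, and Ω := {ℳf > λ}, where ℳ is the dyadic maximal operator over 𝒟*. If Ω ≠ X, then there is a pairwise disjoint collection of cubes 𝒫 ⊆ 𝒟* with Ω = ⋃_{P∈𝒫} P and, for every P ∈ 𝒫, λ < ⟨f⟩_{1,P} ≤ c λ, where c = C(2AC₀/(c₀δ))^ν depends only on the dyadic parameters, the doubling dimension ν, and the quasimetric constant A. -/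

import Mathlib

open MeasureTheory
open scoped ENNReal

/-- Calderón–Zygmund lemma on a bounded doubling quasimetric measure space with a dyadic system:
if `Ω = {ℳf > λ} ≠ X`, there is a pairwise disjoint family `𝔓` of dyadic cubes with
`Ω = ⋃ 𝔓` and `λ < ⟨f⟩_{1,P} ≤ C (2AC₀/(c₀δ))^ν λ` for every `P ∈ 𝔓`. -/
theorem stmt_12 {X : Type*} [MeasurableSpace X]
    (d : X → X → ℝ) (A : ℝ) (hA : 1 ≤ A)
    (hd_symm : ∀ x y, d x y = d y x) (hd_self : ∀ x, d x x = 0)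
    (hd_nonneg : ∀ x y, 0 ≤ d x y)
    (hd_tri : ∀ x y z, d x y ≤ A * (d x z + d z y))
    (μ : Measure X) (C : ℝ) (hC : 1 ≤ C)
    (hball : ∀ x r, 0 < r → 0 < μ {y | d x y < r} ∧ μ {y | d x y < r} < ⊤)
    (hdbl : ∀ x r, 0 < r → μ {y | d x y < 2 * r} ≤ ENNReal.ofReal C * μ {y | d x y < r})
    (ν : ℝ) (hν : ν = Real.logb 2 C)
    -- `X` is bounded
    (Dm : ℝ) (hDm : ∀ x y, d x y ≤ Dm)
    -- dyadic system with parameters `c₀, C₀, δ`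
    (c₀ C₀ δ : ℝ) (hc₀ : 0 < c₀) (hC₀ : c₀ ≤ C₀) (hδ0 : 0 < δ) (hδ1 : δ < 1)
    (𝒟 : ℤ → Set (Set X))
    (hmeas : ∀ k, ∀ Q ∈ 𝒟 k, MeasurableSet Q)
    (hcover : ∀ k, ⋃₀ 𝒟 k = Set.univ)
    (hdisj : ∀ k, (𝒟 k).Pairwise Disjoint)
    (hnested : ∀ k l : ℤ, k ≤ l → ∀ Q ∈ 𝒟 l, ∀ Q' ∈ 𝒟 k, Disjoint Q Q' ∨ Q ⊆ Q')
    (hcenter : ∀ k, ∀ Q ∈ 𝒟 k, ∃ z,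
      {y | d z y < c₀ * δ ^ k} ⊆ Q ∧ Q ⊆ {y | d z y < C₀ * δ ^ k})
    -- the function, the level and the dyadic maximal operator
    (f : X → ℝ≥0∞) (hf : Measurable f) (hfL1 : ∫⁻ x, f x ∂μ < ⊤)
    (lam : ℝ≥0∞) (hlam0 : 0 < lam) (hlamfin : lam < ⊤)
    (M : X → ℝ≥0∞)
    (hM : M = fun x => ⨆ k, ⨆ Q ∈ 𝒟 k, ⨆ (_ : x ∈ Q), (μ Q)⁻¹ * ∫⁻ y in Q, f y ∂μ)
    (hΩ : {x | lam < M x} ≠ Set.univ) :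
    ∃ 𝔓 : Set (Set X), (∀ P ∈ 𝔓, ∃ k, P ∈ 𝒟 k) ∧ 𝔓.Pairwise Disjoint ∧
      ⋃₀ 𝔓 = {x | lam < M x} ∧
      ∀ P ∈ 𝔓, lam < (μ P)⁻¹ * ∫⁻ y in P, f y ∂μ ∧
        (μ P)⁻¹ * ∫⁻ y in P, f y ∂μ ≤
          ENNReal.ofReal (C * (2 * A * C₀ / (c₀ * δ)) ^ ν) * lam := by
  classical
  -- notation: average
  set avg : Set X → ℝ≥0∞ := fun Q => (μ Q)⁻¹ * ∫⁻ y in Q, f y ∂μ with havg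
  -- a point outside Ω
  obtain ⟨x₀, hx₀⟩ := (Set.ne_univ_iff_exists_notMem _).mp hΩ
  have hx₀' : M x₀ ≤ lam := not_lt.mp hx₀
  have hDm0 : 0 ≤ Dm := le_trans (hd_nonneg x₀ x₀) (hDm x₀ x₀)
  -- a very coarse generation k₁ where cubes are all of X
  obtain ⟨n₀, hn₀⟩ := exists_pow_lt_of_lt_one (div_pos hc₀ (by linarith : (0:ℝ) < Dm + 1)) hδ1
  set k₁ : ℤ := -(n₀ : ℤ) with hk₁def
  have hδk₁ : Dm < c₀ * δ ^ k₁ := by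
    have hδn : (0:ℝ) < δ ^ n₀ := pow_pos hδ0 _
    have h1 : δ ^ n₀ * (Dm + 1) < c₀ := by
      rw [← lt_div_iff₀ (by linarith : (0:ℝ) < Dm + 1)]; exact hn₀
    have h2 : Dm + 1 < c₀ / δ ^ n₀ := by
      rw [lt_div_iff₀ hδn]; nlinarith
    have h3 : (δ:ℝ) ^ k₁ = (δ ^ n₀)⁻¹ := by
      rw [hk₁def, zpow_neg, zpow_natCast]
    rw [h3]; rw [div_eq_mul_inv] at h2; linarith
  have hzpow_pos : ∀ j : ℤ, (0:ℝ) < δ ^ j := fun j => zpow_pos hδ0 j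
  have hCδ_pos : ∀ j : ℤ, (0:ℝ) < C₀ * δ ^ j := fun j =>
    mul_pos (lt_of_lt_of_le hc₀ hC₀) (hzpow_pos j)
  have hcδ_pos : ∀ j : ℤ, (0:ℝ) < c₀ * δ ^ j := fun j => mul_pos hc₀ (hzpow_pos j)
  -- coarse cubes are everything
  have hbig : ∀ j : ℤ, j ≤ k₁ → ∀ Q ∈ 𝒟 j, Q = Set.univ := by
    intro j hj Q hQ
    obtain ⟨z, hz1, -⟩ := hcenter j Q hQ
    apply Set.eq_univ_of_univ_subset
    intro y _
    refine hz1 ?_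
    have hmono : (δ:ℝ) ^ k₁ ≤ δ ^ j :=
      zpow_le_zpow_right_of_le_one₀ hδ0 hδ1.le hj
    have : c₀ * δ ^ k₁ ≤ c₀ * δ ^ j := by nlinarith
    exact lt_of_le_of_lt (hDm z y) (lt_of_lt_of_le hδk₁ this)
  -- univ is a cube of generation k₁
  have huniv : Set.univ ∈ 𝒟 k₁ := by
    have : x₀ ∈ ⋃₀ 𝒟 k₁ := by rw [hcover]; trivial
    obtain ⟨Q, hQ, -⟩ := this
    rwa [hbig k₁ le_rfl Q hQ] at hQ
  -- single-term lower bound for M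
  have hMge : ∀ x : X, ∀ k : ℤ, ∀ Q ∈ 𝒟 k, x ∈ Q → avg Q ≤ M x := by
    intro x k Q hQ hx
    rw [hM]
    exact le_iSup_of_le k (le_iSup_of_le Q (le_iSup_of_le hQ (le_iSup_of_le hx le_rfl)))
  have havg_univ : avg Set.univ ≤ lam :=
    le_trans (hMge x₀ k₁ Set.univ huniv trivial) hx₀'
  -- cubes have positive finite measure and are nonempty
  have hμQ : ∀ j : ℤ, ∀ Q ∈ 𝒟 j, 0 < μ Q ∧ μ Q < ⊤ := by
    intro j Q hQ
    obtain ⟨z, hz1, hz2⟩ := hcenter j Q hQ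
    constructor
    · exact lt_of_lt_of_le (hball z _ (hcδ_pos j)).1 (measure_mono hz1)
    · exact lt_of_le_of_lt (measure_mono hz2) (hball z _ (hCδ_pos j)).2
  have hQneP : ∀ j : ℤ, ∀ Q ∈ 𝒟 j, Q.Nonempty := by
    intro j Q hQ
    obtain ⟨z, hz1, -⟩ := hcenter j Q hQ
    exact ⟨z, hz1 (by simpa [hd_self] using hcδ_pos j)⟩
  -- cubes with large average: not univ, generation above k₁
  have hne_univ : ∀ Q : Set X, lam < avg Q → Q ≠ Set.univ := by
    intro Q hQ h
    rw [h] at hQ; exact absurd havg_univ (not_le.mpr hQ)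
  have hgen_gt : ∀ j : ℤ, ∀ Q ∈ 𝒟 j, lam < avg Q → k₁ < j := by
    intro j Q hQ hlt
    by_contra h
    exact hne_univ Q hlt (hbig j (not_lt.mp h) Q hQ)
  -- the family of maximal cubes
  set 𝔓 : Set (Set X) := {P | (∃ k, P ∈ 𝒟 k) ∧ lam < avg P ∧
      ∀ Q : Set X, (∃ k, Q ∈ 𝒟 k) → P ⊆ Q → lam < avg Q → Q ⊆ P} with h𝔓
  -- every large-average cube extends to a maximal one
  have hmaxext : ∀ Q : Set X, (∃ k, Q ∈ 𝒟 k) → lam < avg Q → ∃ P ∈ 𝔓, Q ⊆ P := by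
    intro Q ⟨k, hQk⟩ hlt
    obtain ⟨m, ⟨R, hRm, hQR, hltR⟩, hmin⟩ := Int.exists_least_of_bdd
      (P := fun j => ∃ R ∈ 𝒟 j, Q ⊆ R ∧ lam < avg R)
      ⟨k₁, fun j ⟨R, hR, _, h⟩ => (hgen_gt j R hR h).le⟩
      ⟨k, Q, hQk, subset_rfl, hlt⟩
    refine ⟨R, ⟨⟨m, hRm⟩, hltR, ?_⟩, hQR⟩
    intro Q' ⟨k', hQ'⟩ hRQ' hltQ'
    have hk' : m ≤ k' := hmin k' ⟨Q', hQ', hQR.trans hRQ', hltQ'⟩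
    rcases hnested m k' hk' Q' hQ' R hRm with hdis | hsub
    · obtain ⟨y, hy⟩ := hQneP m R hRm
      exact absurd hy (Set.disjoint_left.mp hdis (hRQ' hy))
    · exact hsub
  refine ⟨𝔓, fun P hP => hP.1, ?_, ?_, ?_⟩
  · -- pairwise disjoint
    have key : ∀ P ∈ 𝔓, ∀ P' ∈ 𝔓, ∀ k k' : ℤ, k ≤ k' → P ∈ 𝒟 k → P' ∈ 𝒟 k' →
        P ≠ P' → Disjoint P' P := by
      intro P hP P' hP' k k' hkk' hPk hP'k' hne
      rcases hnested k k' hkk' P' hP'k' P hPk with hdis | hsub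
      · exact hdis
      · exact absurd (Set.Subset.antisymm (hP'.2.2 P hP.1 hsub hP.2.1) hsub) hne
    intro P hP P' hP' hne
    obtain ⟨k, hPk⟩ := hP.1
    obtain ⟨k', hP'k⟩ := hP'.1
    rcases le_total k k' with h | h
    · exact (key P hP P' hP' k k' h hPk hP'k hne).symm
    · exact key P' hP' P hP k' k h hP'k hPk hne.symm
  · -- union is Ω
    ext x
    simp only [Set.mem_sUnion, Set.mem_setOf_eq]
    constructor
    · rintro ⟨P, hP, hxP⟩
      exact lt_of_lt_of_le hP.2.1 (hMge x hP.1.choose P hP.1.choose_spec hxP)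
    · intro hx
      rw [hM] at hx
      simp only [lt_iSup_iff] at hx
      obtain ⟨k, Q, hQ, hxQ, hlt⟩ := hx
      obtain ⟨P, hP, hQP⟩ := hmaxext Q ⟨k, hQ⟩ hlt
      exact ⟨P, hP, hQP hxQ⟩
  · -- the two bounds
    intro P hP
    obtain ⟨⟨k, hPk⟩, hlt, hmax⟩ := hP
    refine ⟨hlt, ?_⟩
    obtain ⟨x, hx⟩ := hQneP k P hPk
    have hk : k₁ < k := hgen_gt k P hPk hlt
    -- greatest generation j with a cube ∋ x different from P
    obtain ⟨j, ⟨hjk, Q, hQj, hxQ, hQne⟩, hgr⟩ := Int.exists_greatest_of_bdd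
      (P := fun j => j ≤ k ∧ ∃ Q ∈ 𝒟 j, x ∈ Q ∧ Q ≠ P)
      ⟨k, fun j h => h.1⟩
      ⟨k₁, hk.le, Set.univ, huniv, trivial, (hne_univ P hlt).symm⟩
    have hjk' : j < k := by
      rcases lt_or_eq_of_le hjk with h | rfl
      · exact h
      · exact absurd (hdisj j hQj hPk hQne) (fun hdis =>
          Set.disjoint_left.mp hdis hxQ hx)
    -- P is also a cube of generation j+1
    have hPj1 : P ∈ 𝒟 (j + 1) := by
      have : x ∈ ⋃₀ 𝒟 (j + 1) := by rw [hcover]; trivial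
      obtain ⟨Q', hQ', hxQ'⟩ := this
      by_cases h : Q' = P
      · rwa [h] at hQ'
      · exact absurd (hgr (j + 1) ⟨by omega, Q', hQ', hxQ', h⟩) (by omega)
    -- P ⊆ Q and Q has small average
    have hPQ : P ⊆ Q := by
      rcases hnested j (j + 1) (by omega) P hPj1 Q hQj with hdis | hsub
      · exact absurd hxQ (Set.disjoint_left.mp hdis hx)
      · exact hsub
    have havgQ : avg Q ≤ lam := by
      by_contra h
      exact hQne (Set.Subset.antisymm (hmax Q ⟨j, hQj⟩ hPQ (not_le.mp h)) hPQ)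
    -- geometry: Q is inside a dilated ball of P's center
    obtain ⟨z, hz1, hz2⟩ := hcenter (j + 1) P hPj1
    obtain ⟨z', hz'1, hz'2⟩ := hcenter j Q hQj
    have hzP : z ∈ P := hz1 (by simpa [hd_self] using hcδ_pos (j + 1))
    have hzz' : d z' z < C₀ * δ ^ j := hz'2 (hPQ hzP)
    have hA0 : (0:ℝ) < A := lt_of_lt_of_le one_pos hA
    have hQball : Q ⊆ {y | d z y < 2 * A * C₀ * δ ^ j} := by
      intro y hy
      have h1 : d z' y < C₀ * δ ^ j := hz'2 hy
      have h2 : d z y ≤ A * (d z z' + d z' y) := hd_tri z y z'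
      have h3 : d z z' = d z' z := hd_symm z z'
      have : A * (d z z' + d z' y) < A * (C₀ * δ ^ j + C₀ * δ ^ j) := by
        apply mul_lt_mul_of_pos_left _ hA0
        rw [h3]; linarith
      simp only [Set.mem_setOf_eq]
      nlinarith
    -- radii
    set r : ℝ := c₀ * δ ^ (j + 1) with hr
    set t : ℝ := 2 * A * C₀ / (c₀ * δ) with ht
    have hr0 : 0 < r := hcδ_pos (j + 1)
    have htr : t * r = 2 * A * C₀ * δ ^ j := by
      rw [ht, hr]
      have : (δ:ℝ) ^ (j + 1) = δ ^ j * δ := by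
        rw [zpow_add_one₀ (ne_of_gt hδ0)]
      rw [this]
      field_simp
    have ht2 : (2:ℝ) ≤ t := by
      rw [ht, le_div_iff₀ (mul_pos hc₀ hδ0)]
      have h1 : c₀ * δ ≤ C₀ * 1 := by nlinarith
      nlinarith
    have ht0 : (0:ℝ) < t := by linarith
    have hC0 : (0:ℝ) < C := lt_of_lt_of_le one_pos hC
    -- doubling iteration
    have hiter : ∀ m : ℕ, μ {y | d z y < 2 ^ m * r} ≤
        ENNReal.ofReal C ^ m * μ {y | d z y < r} := by
      intro m
      induction m with
      | zero => simp
      | succ m ih =>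
        have h1 : (2:ℝ) ^ (m + 1) * r = 2 * (2 ^ m * r) := by ring
        rw [h1]
        calc μ {y | d z y < 2 * (2 ^ m * r)}
            ≤ ENNReal.ofReal C * μ {y | d z y < 2 ^ m * r} :=
              hdbl z _ (by positivity)
          _ ≤ ENNReal.ofReal C * (ENNReal.ofReal C ^ m * μ {y | d z y < r}) :=
              mul_le_mul_right ih _
          _ = ENNReal.ofReal C ^ (m + 1) * μ {y | d z y < r} := by ring
    -- choose m with t ≤ 2^m and C^m ≤ C * t^ν
    set m : ℕ := ⌈Real.logb 2 t⌉₊ with hm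
    have hlogb_pos : 0 ≤ Real.logb 2 t := by
      apply Real.logb_nonneg one_lt_two (by linarith)
    have ht2m : t ≤ 2 ^ m := by
      have h1 : Real.logb 2 t ≤ (m : ℝ) := Nat.le_ceil _
      have h2 : (2:ℝ) ^ Real.logb 2 t ≤ (2:ℝ) ^ (m:ℝ) :=
        Real.rpow_le_rpow_of_exponent_le one_le_two h1
      rwa [Real.rpow_logb two_pos (by norm_num) ht0, Real.rpow_natCast] at h2
    have hCm : C ^ m ≤ C * t ^ ν := by
      have h1 : (m : ℝ) ≤ Real.logb 2 t + 1 := (Nat.ceil_lt_add_one hlogb_pos).le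
      have h2 : (C:ℝ) ^ (m:ℝ) ≤ C ^ (Real.logb 2 t + 1) :=
        Real.rpow_le_rpow_of_exponent_le hC h1
      rw [Real.rpow_natCast] at h2
      have h3 : (C:ℝ) ^ (Real.logb 2 t + 1) = C ^ Real.logb 2 t * C := by
        rw [Real.rpow_add hC0, Real.rpow_one]
      have h4 : (C:ℝ) ^ Real.logb 2 t = t ^ ν := by
        rw [hν, Real.rpow_def_of_pos hC0, Real.rpow_def_of_pos ht0,
          Real.logb, Real.logb]
        congr 1
        ring
      calc (C:ℝ) ^ m ≤ C ^ (Real.logb 2 t + 1) := h2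
        _ = C ^ Real.logb 2 t * C := h3
        _ = t ^ ν * C := by rw [h4]
        _ = C * t ^ ν := by ring
    -- measure comparison
    have hμcomp : μ Q ≤ ENNReal.ofReal (C * t ^ ν) * μ P := by
      calc μ Q ≤ μ {y | d z y < 2 * A * C₀ * δ ^ j} := measure_mono hQball
        _ = μ {y | d z y < t * r} := by rw [htr]
        _ ≤ μ {y | d z y < 2 ^ m * r} := by
            apply measure_mono
            intro y hy
            simp only [Set.mem_setOf_eq] at *
            have : t * r ≤ 2 ^ m * r := by nlinarith
            linarith
        _ ≤ ENNReal.ofReal C ^ m * μ {y | d z y < r} := hiter m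
        _ ≤ ENNReal.ofReal (C * t ^ ν) * μ P := by
            apply mul_le_mul'
            · rw [← ENNReal.ofReal_pow hC0.le]
              exact ENNReal.ofReal_le_ofReal hCm
            · exact measure_mono hz1
    -- put it all together
    have hμP0 : μ P ≠ 0 := (hμQ k P hPk).1.ne'
    have hμPfin : μ P ≠ ⊤ := (hμQ k P hPk).2.ne
    have hμQ0 : μ Q ≠ 0 := (hμQ j Q hQj).1.ne'
    have hμQfin : μ Q ≠ ⊤ := (hμQ j Q hQj).2.ne
    have hint : ∫⁻ y in Q, f y ∂μ ≤ μ Q * lam := by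
      have h1 : ∫⁻ y in Q, f y ∂μ = μ Q * avg Q := by
        rw [havg]
        simp only []
        rw [← mul_assoc, ENNReal.mul_inv_cancel hμQ0 hμQfin, one_mul]
      rw [h1]
      exact mul_le_mul_right havgQ _
    calc avg P = (μ P)⁻¹ * ∫⁻ y in P, f y ∂μ := rfl
      _ ≤ (μ P)⁻¹ * ∫⁻ y in Q, f y ∂μ :=
          mul_le_mul_right (lintegral_mono_set hPQ) _
      _ ≤ (μ P)⁻¹ * (μ Q * lam) := mul_le_mul_right hint _
      _ ≤ (μ P)⁻¹ * (ENNReal.ofReal (C * t ^ ν) * μ P * lam) := by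
          apply mul_le_mul_right
          exact mul_le_mul_left hμcomp _
      _ = ENNReal.ofReal (C * t ^ ν) * ((μ P)⁻¹ * μ P) * lam := by ring
      _ = ENNReal.ofReal (C * t ^ ν) * lam := by
          rw [ENNReal.inv_mul_cancel hμP0 hμPfin, mul_one]
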